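/- arXiv:2107.05836 — 2 statements merged into one kernel-verified Lean document; each statement's English description precedes it below -/
import Mathlib

section
/- Let c > 0, t > 0, and x ∈ ℝ. Then ∫₀^∞ e^{-cut} |u - x|^{-1/2} du ≤ C·t^{-1/2} for a constant C depending only on c (independent of x and t). -/
open MeasureTheory

lemma abs_rpow_intble (δ : ℝ) (hδ : 0 < δ) :
    IntervalIntegrable (fun v : ℝ => |v| ^ (-(1 / 2) : ℝ)) volume 0 δ := by
  rw [intervalIntegrable_iff_integrableOn_Ioc_of_le hδ.le]
  have h : IntegrableOn (fun v : ℝ => v ^ (-(1 / 2) : ℝ)) (Set.Ioc 0 δ) volume := by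
    rw [← intervalIntegrable_iff_integrableOn_Ioc_of_le hδ.le]
    exact intervalIntegral.intervalIntegrable_rpow' (by norm_num)
  exact h.congr_fun (fun v hv => by rw [abs_of_pos hv.1]) measurableSet_Ioc

lemma abs_rpow_intble_neg (δ : ℝ) (hδ : 0 < δ) :
    IntervalIntegrable (fun v : ℝ => |v| ^ (-(1 / 2) : ℝ)) volume (-δ) 0 := by
  have h := (IntervalIntegrable.iff_comp_neg).mp (abs_rpow_intble δ hδ)
  simp only [abs_neg, neg_zero] at h
  exact h.symm

lemma abs_rpow_integral_half (δ : ℝ) (hδ : 0 < δ) :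
    (∫ v in (0 : ℝ)..δ, |v| ^ (-(1 / 2) : ℝ)) = 2 * δ ^ ((1 : ℝ) / 2) := by
  have h1 : (∫ v in (0 : ℝ)..δ, |v| ^ (-(1 / 2) : ℝ))
      = ∫ v in (0 : ℝ)..δ, v ^ (-(1 / 2) : ℝ) := by
    refine intervalIntegral.integral_congr fun v hv => ?_
    rw [Set.uIcc_of_le hδ.le] at hv
    rw [abs_of_nonneg hv.1]
  rw [h1, integral_rpow (Or.inl (by norm_num))]
  rw [Real.zero_rpow (by norm_num)]
  norm_num
  rw [div_eq_iff (by norm_num : (1:ℝ)/2 ≠ 0)]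
  ring

lemma abs_rpow_integral_full (δ : ℝ) (hδ : 0 < δ) :
    (∫ v in (-δ : ℝ)..δ, |v| ^ (-(1 / 2) : ℝ)) = 4 * δ ^ ((1 : ℝ) / 2) := by
  have hsplit := intervalIntegral.integral_add_adjacent_intervals
    (abs_rpow_intble_neg δ hδ) (abs_rpow_intble δ hδ)
  have hneg : (∫ v in (-δ : ℝ)..0, |v| ^ (-(1 / 2) : ℝ))
      = ∫ v in (0 : ℝ)..δ, |v| ^ (-(1 / 2) : ℝ) := by
    have := intervalIntegral.integral_comp_neg (a := (-δ:ℝ)) (b := 0)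
      (fun v : ℝ => |v| ^ (-(1 / 2) : ℝ))
    simp only [abs_neg, neg_zero, neg_neg] at this
    rw [this]
  rw [← hsplit, hneg, abs_rpow_integral_half δ hδ]
  ring

theorem exp_singular_integral_bound (c : ℝ) (hc : 0 < c) :
    ∃ C : ℝ, 0 < C ∧ ∀ t x : ℝ, 0 < t →
      (∫ u in Set.Ioi (0 : ℝ), Real.exp (-(c * u * t)) * |u - x| ^ (-(1 / 2) : ℝ)) ≤
        C * t ^ (-(1 / 2) : ℝ) := by
  refine ⟨5 * c ^ (-(1 / 2) : ℝ), by positivity, fun t x ht => ?_⟩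
  set b : ℝ := c * t with hbdef
  have hb : 0 < b := mul_pos hc ht
  set δ : ℝ := b⁻¹ with hδdef
  have hδ : 0 < δ := inv_pos.mpr hb
  set r : ℝ := -(1 / 2) with hrdef
  -- interval integrability of |u - x| ^ r on (x-δ, x+δ)
  have hII : IntervalIntegrable (fun u : ℝ => |u - x| ^ r) volume (x - δ) (x + δ) := by
    have h := ((abs_rpow_intble_neg δ hδ).trans (abs_rpow_intble δ hδ)).comp_sub_right x
    have e1 : -δ + x = x - δ := by ring
    have e2 : δ + x = x + δ := by ring
    rwa [e1, e2] at h
  have hI1 : IntegrableOn (fun u : ℝ => |u - x| ^ r) (Set.Ioo (x - δ) (x + δ)) volume := by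
    have := (intervalIntegrable_iff_integrableOn_Ioc_of_le (by linarith : x - δ ≤ x + δ)).mp hII
    exact this.mono_set Set.Ioo_subset_Ioc_self
  -- the dominating functions
  set g1 : ℝ → ℝ := (Set.Ioo (x - δ) (x + δ)).indicator (fun u => |u - x| ^ r) with hg1def
  set g2 : ℝ → ℝ := fun u => δ ^ r * Real.exp (-(b * u)) with hg2def
  have hg1int : Integrable g1 volume :=
    (integrable_indicator_iff measurableSet_Ioo).mpr hI1
  have hg2int : IntegrableOn g2 (Set.Ioi (0 : ℝ)) volume := by
    have h := (exp_neg_integrableOn_Ioi 0 hb).const_mul (δ ^ r)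
    simp only [neg_mul] at h
    exact h
  have hgint : IntegrableOn (fun u => g1 u + g2 u) (Set.Ioi (0 : ℝ)) volume :=
    hg1int.integrableOn.add hg2int
  have hg1nonneg : ∀ u, 0 ≤ g1 u := fun u =>
    Set.indicator_nonneg (fun v _ => Real.rpow_nonneg (abs_nonneg _) _) u
  have hg2nonneg : ∀ u, 0 ≤ g2 u := fun u =>
    mul_nonneg (Real.rpow_nonneg hδ.le _) (Real.exp_pos _).le
  -- pointwise bound on Ioi 0
  have hpt : ∀ u ∈ Set.Ioi (0 : ℝ),
      Real.exp (-(c * u * t)) * |u - x| ^ r ≤ g1 u + g2 u := by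
    intro u hu
    have hu0 : 0 < u := hu
    by_cases h : |u - x| < δ
    · have hmem : u ∈ Set.Ioo (x - δ) (x + δ) := by
        rcases abs_lt.mp h with ⟨h1, h2⟩
        exact ⟨by linarith, by linarith⟩
      have hexp : Real.exp (-(c * u * t)) ≤ 1 := by
        rw [← Real.exp_zero]
        exact Real.exp_le_exp.mpr (by nlinarith)
      calc Real.exp (-(c * u * t)) * |u - x| ^ r
          ≤ 1 * |u - x| ^ r :=
            mul_le_mul_of_nonneg_right hexp (Real.rpow_nonneg (abs_nonneg _) _)
        _ = g1 u := by rw [one_mul, hg1def, Set.indicator_of_mem hmem]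
        _ ≤ g1 u + g2 u := le_add_of_nonneg_right (hg2nonneg u)
    · push_neg at h
      have hrpow : |u - x| ^ r ≤ δ ^ r :=
        Real.rpow_le_rpow_of_nonpos hδ h (by rw [hrdef]; norm_num)
      calc Real.exp (-(c * u * t)) * |u - x| ^ r
          ≤ Real.exp (-(c * u * t)) * δ ^ r :=
            mul_le_mul_of_nonneg_left hrpow (Real.exp_pos _).le
        _ = g2 u := by rw [hg2def, hbdef]; ring_nf
        _ ≤ g1 u + g2 u := le_add_of_nonneg_left (hg1nonneg u)
  -- compare integrals
  have hmono : (∫ u in Set.Ioi (0 : ℝ), Real.exp (-(c * u * t)) * |u - x| ^ r)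
      ≤ ∫ u in Set.Ioi (0 : ℝ), (g1 u + g2 u) := by
    refine integral_mono_of_nonneg ?_ hgint ?_
    · filter_upwards with u using
        mul_nonneg (Real.exp_pos _).le (Real.rpow_nonneg (abs_nonneg _) _)
    · filter_upwards [ae_restrict_mem measurableSet_Ioi] with u hu using hpt u hu
  -- value of the g1 part
  have hval1 : (∫ u in Set.Ioi (0 : ℝ), g1 u) ≤ 4 * δ ^ ((1 : ℝ) / 2) := by
    have hle : (∫ u in Set.Ioi (0 : ℝ), g1 u) ≤ ∫ u, g1 u :=
      setIntegral_le_integral hg1int (Filter.Eventually.of_forall hg1nonneg)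
    have heq : (∫ u, g1 u) = 4 * δ ^ ((1 : ℝ) / 2) := by
      rw [hg1def, integral_indicator measurableSet_Ioo,
        ← integral_Ioc_eq_integral_Ioo,
        ← intervalIntegral.integral_of_le (by linarith : x - δ ≤ x + δ)]
      have hcomp := intervalIntegral.integral_comp_sub_right
        (a := x - δ) (b := x + δ) (fun v : ℝ => |v| ^ r) x
      have e1 : x - δ - x = -δ := by ring
      have e2 : x + δ - x = δ := by ring
      rw [e1, e2] at hcomp
      rw [hcomp, hrdef, abs_rpow_integral_full δ hδ]
    linarith [hle, heq.le]
  -- value of the g2 part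
  have hexpint : (∫ u in Set.Ioi (0 : ℝ), Real.exp (-(b * u))) = b⁻¹ := by
    have h := integral_comp_mul_left_Ioi (fun v : ℝ => Real.exp (-v)) 0 hb
    simp only [mul_zero, smul_eq_mul] at h
    rw [h, integral_exp_neg_Ioi, neg_zero, Real.exp_zero, mul_one]
  have hval2 : (∫ u in Set.Ioi (0 : ℝ), g2 u) = δ ^ ((1 : ℝ) / 2) := by
    rw [hg2def, integral_const_mul, hexpint]
    rw [← hδdef]
    rw [hrdef]
    nth_rewrite 2 [show δ = δ ^ (1 : ℝ) by rw [Real.rpow_one]]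
    rw [← Real.rpow_add hδ]
    norm_num
  have hsum : (∫ u in Set.Ioi (0 : ℝ), (g1 u + g2 u))
      = (∫ u in Set.Ioi (0 : ℝ), g1 u) + ∫ u in Set.Ioi (0 : ℝ), g2 u :=
    integral_add hg1int.integrableOn hg2int
  -- final computation
  have hfinal : δ ^ ((1 : ℝ) / 2) = c ^ (-(1 / 2) : ℝ) * t ^ (-(1 / 2) : ℝ) := by
    rw [hδdef, Real.inv_rpow hb.le, ← Real.rpow_neg hb.le, hbdef,
      Real.mul_rpow hc.le ht.le]
  calc (∫ u in Set.Ioi (0 : ℝ), Real.exp (-(c * u * t)) * |u - x| ^ r)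
      ≤ ∫ u in Set.Ioi (0 : ℝ), (g1 u + g2 u) := hmono
    _ = (∫ u in Set.Ioi (0 : ℝ), g1 u) + ∫ u in Set.Ioi (0 : ℝ), g2 u := hsum
    _ ≤ 4 * δ ^ ((1 : ℝ) / 2) + δ ^ ((1 : ℝ) / 2) := by linarith [hval1, hval2.le]
    _ = 5 * δ ^ ((1 : ℝ) / 2) := by ring
    _ = 5 * c ^ (-(1 / 2) : ℝ) * t ^ (-(1 / 2) : ℝ) := by rw [hfinal]; ring
end

section
/- Let c > 0, t > 0, x ∈ ℝ, and p > 1 with conjugate exponent q. Suppose h : (0,∞) → [0,∞) satisfies h(u) ≤ u^{1/p - 1/2} for all u > 0. Then ∫₀^∞ h(u)·|u - x|^{-1/p}·e^{-cut} du ≤ C·t^{-1/2} for a constant C depending only on c and p. -/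
open MeasureTheory Set Real

-- key: s^(1/2) e^{-cs} ≤ c^{-1/2}
lemma J32_key (c s : ℝ) (hc : 0 < c) (hs : 0 ≤ s) :
    s ^ ((1:ℝ)/2) * Real.exp (-(c * s)) ≤ c ^ (-(1/2) : ℝ) := by
  have hr : (0:ℝ) ≤ c * s := by positivity
  have h1 : (c*s) ^ ((1:ℝ)/2) ≤ Real.exp (c*s) := by
    rcases le_total (c*s) 1 with h | h
    · calc (c*s) ^ ((1:ℝ)/2) ≤ 1 ^ ((1:ℝ)/2) := Real.rpow_le_rpow hr h (by norm_num)
      _ = 1 := Real.one_rpow _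
      _ ≤ Real.exp (c*s) := by linarith [Real.add_one_le_exp (c*s)]
    · calc (c*s) ^ ((1:ℝ)/2) ≤ (c*s) ^ (1:ℝ) := Real.rpow_le_rpow_of_exponent_le h (by norm_num)
      _ = c*s := Real.rpow_one _
      _ ≤ Real.exp (c*s) := by linarith [Real.add_one_le_exp (c*s)]
  have h2 : (c*s) ^ ((1:ℝ)/2) * Real.exp (-(c*s)) ≤ 1 := by
    rw [Real.exp_neg, mul_inv_le_iff₀ (Real.exp_pos _), one_mul]
    exact h1
  have h3 : s ^ ((1:ℝ)/2) = c ^ (-(1/2):ℝ) * (c*s) ^ ((1:ℝ)/2) := by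
    rw [Real.mul_rpow hc.le hs, Real.rpow_neg hc.le, ← mul_assoc,
      inv_mul_cancel₀ (Real.rpow_pos_of_pos hc _).ne', one_mul]
  calc s ^ ((1:ℝ)/2) * Real.exp (-(c*s))
      = c ^ (-(1/2):ℝ) * ((c*s) ^ ((1:ℝ)/2) * Real.exp (-(c*s))) := by rw [h3, mul_assoc]
    _ ≤ c ^ (-(1/2):ℝ) * 1 := by
        have : (0:ℝ) ≤ c ^ (-(1/2):ℝ) := (Real.rpow_pos_of_pos hc _).le
        exact mul_le_mul_of_nonneg_left h2 this
    _ = c ^ (-(1/2):ℝ) := mul_one _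

lemma J32_mid (b x : ℝ) (_hb0 : 0 < b) (hb1 : b < 1) (hx : 0 < x) :
    IntegrableOn (fun u => |u - x| ^ (-b)) (Set.Icc (x/2) (3*x/2)) ∧
    ∫ u in Set.Icc (x/2) (3*x/2), |u - x| ^ (-b) = 2 * ((x/2) ^ (1-b) / (1-b)) := by
  have h1 : x/2 ≤ x := by linarith
  have h2 : x ≤ 3*x/2 := by linarith
  have hb' : (-1:ℝ) < -b := by linarith
  have base : IntervalIntegrable (fun v : ℝ => v ^ (-b)) volume 0 (x/2) :=
    intervalIntegral.intervalIntegrable_rpow' hb'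
  have baseval : ∫ v in (0:ℝ)..(x/2), v ^ (-b) = (x/2) ^ (1-b) / (1-b) := by
    rw [integral_rpow (Or.inl hb')]
    rw [Real.zero_rpow (by linarith : -b + (1:ℝ) ≠ 0)]
    rw [show -b + (1:ℝ) = 1 - b by ring]
    ring
  -- right piece
  have hR : IntervalIntegrable (fun u : ℝ => (u - x) ^ (-b)) volume x (3*x/2) := by
    have h := base.comp_sub_right x
    rw [zero_add, show x/2 + x = 3*x/2 by ring] at h
    exact h
  have hRval : ∫ u in x..(3*x/2), (u - x) ^ (-b) = (x/2) ^ (1-b) / (1-b) := by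
    rw [intervalIntegral.integral_comp_sub_right (fun v : ℝ => v ^ (-b)) x, sub_self,
      show 3*x/2 - x = x/2 by ring, baseval]
  -- left piece
  have hL : IntervalIntegrable (fun u : ℝ => (x - u) ^ (-b)) volume (x/2) x := by
    have h := base.comp_sub_left x
    rw [sub_zero, show x - x/2 = x/2 by ring] at h
    exact h.symm
  have hLval : ∫ u in (x/2)..x, (x - u) ^ (-b) = (x/2) ^ (1-b) / (1-b) := by
    rw [intervalIntegral.integral_comp_sub_left (fun v : ℝ => v ^ (-b)) x, sub_self,
      show x - x/2 = x/2 by ring, baseval]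
  have eqR : Set.EqOn (fun u : ℝ => (u - x) ^ (-b)) (fun u => |u - x| ^ (-b))
      (Set.Ioc x (3*x/2)) := fun u hu => by
    simp only [abs_of_nonneg (by linarith [hu.1] : (0:ℝ) ≤ u - x)]
  have eqL : Set.EqOn (fun u : ℝ => (x - u) ^ (-b)) (fun u => |u - x| ^ (-b))
      (Set.Ioc (x/2) x) := fun u hu => by
    simp only [abs_sub_comm, abs_of_nonneg (by linarith [hu.2] : (0:ℝ) ≤ x - u)]
  have hRI : IntegrableOn (fun u : ℝ => |u - x| ^ (-b)) (Set.Ioc x (3*x/2)) :=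
    ((intervalIntegrable_iff_integrableOn_Ioc_of_le h2).mp hR).congr_fun eqR measurableSet_Ioc
  have hLI : IntegrableOn (fun u : ℝ => |u - x| ^ (-b)) (Set.Ioc (x/2) x) :=
    ((intervalIntegrable_iff_integrableOn_Ioc_of_le h1).mp hL).congr_fun eqL measurableSet_Ioc
  have hunion : Set.Ioc (x/2) x ∪ Set.Ioc x (3*x/2) = Set.Ioc (x/2) (3*x/2) :=
    Set.Ioc_union_Ioc_eq_Ioc h1 h2
  constructor
  · rw [integrableOn_Icc_iff_integrableOn_Ioc, ← hunion]
    exact hLI.union hRI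
  · rw [integral_Icc_eq_integral_Ioc, ← hunion,
      setIntegral_union (Set.Ioc_disjoint_Ioc_of_le le_rfl) measurableSet_Ioc hLI hRI]
    have e1 : ∫ u in Set.Ioc (x/2) x, |u - x| ^ (-b) = (x/2) ^ (1-b) / (1-b) := by
      rw [← setIntegral_congr_fun measurableSet_Ioc eqL, ← intervalIntegral.integral_of_le h1,
        hLval]
    have e2 : ∫ u in Set.Ioc x (3*x/2), |u - x| ^ (-b) = (x/2) ^ (1-b) / (1-b) := by
      rw [← setIntegral_congr_fun measurableSet_Ioc eqR, ← intervalIntegral.integral_of_le h2,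
        hRval]
    rw [e1, e2]; ring


set_option maxHeartbeats 1000000 in
theorem J32_estimate (c p : ℝ) (hc : 0 < c) (hp : 1 < p) :
    ∃ C : ℝ, 0 < C ∧ ∀ (t x : ℝ) (h : ℝ → ℝ), 0 < t →
      (∀ u : ℝ, 0 < u → 0 ≤ h u ∧ h u ≤ u ^ (1 / p - 1 / 2)) →
      (∫ u in Set.Ioi (0 : ℝ), h u * |u - x| ^ (-(1 / p)) * Real.exp (-(c * u * t))) ≤
        C * t ^ (-(1 / 2) : ℝ) := by
  have hp0 : 0 < p := by linarith
  set b : ℝ := 1 / p with hbdef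
  have hb0 : 0 < b := by positivity
  have hb1 : b < 1 := by rw [hbdef]; rw [div_lt_one hp0]; exact hp
  have h1b : 0 < 1 - b := by linarith
  have hGam : 0 < Real.Gamma (1/2) := Real.Gamma_pos_of_pos (by norm_num)
  refine ⟨3 ^ b * Real.Gamma (1/2) * c ^ (-(1/2) : ℝ) + 8/(1-b) * c ^ (-(1/2) : ℝ),
    by positivity, ?_⟩
  intro t x h ht hh
  set K : ℝ := 4 * (x/2) ^ (b - 1/2) * Real.exp (-(c*(x/2)*t)) with hKdef
  set G : ℝ → ℝ := fun u => 3 ^ b * (u ^ (-(1/2) : ℝ) * Real.exp (-(c*t*u))) +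
    Set.indicator (Set.Icc (x/2) (3*x/2)) (fun u => K * |u - x| ^ (-b)) u with hGdef
  -- integrability of first part of G
  have hI1 : IntegrableOn (fun u : ℝ => u ^ (-(1/2) : ℝ) * Real.exp (-(c*t*u))) (Set.Ioi 0) := by
    have h0 := integrableOn_rpow_mul_exp_neg_mul_rpow
      (by norm_num : (-1:ℝ) < -(1/2)) (by norm_num : (0:ℝ) < 1) (mul_pos hc ht)
    refine h0.congr_fun (fun u _ => ?_) measurableSet_Ioi
    simp only [Real.rpow_one]
    ring_nf
  -- value of first part
  have hV1 : ∫ u in Set.Ioi (0:ℝ), u ^ (-(1/2) : ℝ) * Real.exp (-(c*t*u)) =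
      Real.Gamma (1/2) * (c ^ (-(1/2) : ℝ) * t ^ (-(1/2) : ℝ)) := by
    have h0 : ∫ u in Set.Ioi (0:ℝ), u ^ (-(1/2) : ℝ) * Real.exp (-(c*t*u)) =
        ∫ u in Set.Ioi (0:ℝ), u ^ ((1/2 : ℝ) - 1) * Real.exp (-((c*t)*u)) := by
      refine setIntegral_congr_fun measurableSet_Ioi (fun u _ => ?_)
      norm_num [mul_assoc]
    rw [h0, Real.integral_rpow_mul_exp_neg_mul_Ioi (by norm_num : (0:ℝ) < 1/2) (mul_pos hc ht)]
    rw [one_div, Real.inv_rpow (mul_pos hc ht).le, ← Real.rpow_neg (mul_pos hc ht).le,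
      Real.mul_rpow hc.le ht.le]
    ring
  -- integrability and bound for the indicator part
  have hImid : Integrable (Set.indicator (Set.Icc (x/2) (3*x/2))
      (fun u => K * |u - x| ^ (-b))) (volume.restrict (Set.Ioi 0)) ∧
      ∫ u in Set.Ioi (0:ℝ), Set.indicator (Set.Icc (x/2) (3*x/2))
        (fun u => K * |u - x| ^ (-b)) u ≤ 8/(1-b) * c ^ (-(1/2) : ℝ) * t ^ (-(1/2) : ℝ) := by
    rcases le_or_gt x 0 with hx | hx
    · have hnull : volume (Set.Icc (x/2) (3*x/2)) = 0 := by
        rw [Real.volume_Icc, show 3*x/2 - x/2 = x by ring]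
        exact ENNReal.ofReal_eq_zero.mpr hx
      have h0 : ∀ᵐ u ∂(volume : Measure ℝ), u ∉ Set.Icc (x/2) (3*x/2) :=
        measure_eq_zero_iff_ae_notMem.mp hnull
      have hae : (Set.indicator (Set.Icc (x/2) (3*x/2)) (fun u => K * |u - x| ^ (-b)))
          =ᵐ[volume.restrict (Set.Ioi 0)] 0 :=
        ae_restrict_of_ae (h0.mono fun u hu => Set.indicator_of_notMem hu _)
      constructor
      · exact (integrable_zero _ _ _).congr hae.symm
      · rw [integral_congr_ae hae]
        simp only [Pi.zero_apply, integral_zero]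
        positivity
    · obtain ⟨hint, hval⟩ := J32_mid b x hb0 hb1 hx
      have hxx : (0:ℝ) < x/2 := by linarith
      have hK0 : 0 ≤ K := by
        have h1 : (0:ℝ) < (x/2) ^ (b - 1/2) := Real.rpow_pos_of_pos hxx _
        rw [hKdef]; positivity
      have hIK : IntegrableOn (fun u => K * |u - x| ^ (-b)) (Set.Icc (x/2) (3*x/2)) :=
        hint.const_mul K
      have hind := hIK.integrable_indicator measurableSet_Icc
      refine ⟨hind.integrableOn, ?_⟩
      have step1 : ∫ u in Set.Ioi (0:ℝ), Set.indicator (Set.Icc (x/2) (3*x/2))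
          (fun u => K * |u - x| ^ (-b)) u ≤
          ∫ u, Set.indicator (Set.Icc (x/2) (3*x/2)) (fun u => K * |u - x| ^ (-b)) u :=
        setIntegral_le_integral hind (ae_of_all _ fun u =>
          Set.indicator_nonneg (fun v _ => mul_nonneg hK0 (Real.rpow_nonneg (abs_nonneg _) _)) u)
      refine step1.trans ?_
      rw [integral_indicator measurableSet_Icc, integral_const_mul, hval]
      have hcomb : (x/2) ^ (b - 1/2) * (x/2) ^ (1-b) = (x/2) ^ ((1:ℝ)/2) := by
        rw [← Real.rpow_add hxx]; congr 1; ring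
      have e1 : K * (2 * ((x/2) ^ (1-b) / (1-b))) =
          8/(1-b) * ((x/2) ^ ((1:ℝ)/2) * Real.exp (-(c*(x/2)*t))) := by
        rw [hKdef]
        field_simp
        rw [← hcomb]; ring
      rw [e1]
      have hsplit : ((x/2)*t) ^ ((1:ℝ)/2) = (x/2) ^ ((1:ℝ)/2) * t ^ ((1:ℝ)/2) :=
        Real.mul_rpow hxx.le ht.le
      have key := J32_key c ((x/2)*t) hc (by positivity)
      rw [hsplit, show -(c*((x/2)*t)) = -(c*(x/2)*t) by ring] at key
      have htt : t ^ ((1:ℝ)/2) * t ^ (-(1/2) : ℝ) = 1 := by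
        rw [← Real.rpow_add ht]; norm_num
      have ht' : (0:ℝ) < t ^ (-(1/2) : ℝ) := Real.rpow_pos_of_pos ht _
      have e2 : (x/2) ^ ((1:ℝ)/2) * Real.exp (-(c*(x/2)*t)) ≤
          c ^ (-(1/2) : ℝ) * t ^ (-(1/2) : ℝ) := by
        have hmul := mul_le_mul_of_nonneg_right key ht'.le
        have heq : (x/2) ^ ((1:ℝ)/2) * Real.exp (-(c*(x/2)*t)) =
            (x/2) ^ ((1:ℝ)/2) * t ^ ((1:ℝ)/2) * Real.exp (-(c*(x/2)*t)) * t ^ (-(1/2) : ℝ) := by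
          linear_combination ((x/2) ^ ((1:ℝ)/2) * Real.exp (-(c*(x/2)*t))) * htt.symm
        rw [heq]
        exact hmul
      calc 8/(1-b) * ((x/2) ^ ((1:ℝ)/2) * Real.exp (-(c*(x/2)*t)))
          ≤ 8/(1-b) * (c ^ (-(1/2) : ℝ) * t ^ (-(1/2) : ℝ)) :=
            mul_le_mul_of_nonneg_left e2 (by positivity)
        _ = 8/(1-b) * c ^ (-(1/2) : ℝ) * t ^ (-(1/2) : ℝ) := by ring
  -- pointwise bound
  have hpt : ∀ u : ℝ, u ∈ Set.Ioi (0:ℝ) →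
      h u * |u - x| ^ (-(1/p)) * Real.exp (-(c*u*t)) ≤ G u := by
    intro u hu
    simp only [Set.mem_Ioi] at hu
    have hbp : -(1/p) = -b := by rw [hbdef]
    rw [hbp]
    have habs0 : (0:ℝ) ≤ |u - x| ^ (-b) := Real.rpow_nonneg (abs_nonneg _) _
    have hfirst : h u * |u - x| ^ (-b) * Real.exp (-(c*u*t)) ≤
        u ^ (b - 1/2) * |u - x| ^ (-b) * Real.exp (-(c*u*t)) :=
      mul_le_mul_of_nonneg_right
        (mul_le_mul_of_nonneg_right (hh u hu).2 habs0) (Real.exp_pos _).le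
    rcases Classical.em (u ∈ Set.Icc (x/2) (3*x/2)) with hmem | hmem
    · -- middle zone
      have hx : 0 < x := by have := hmem.2; linarith
      have hxx : (0:ℝ) < x/2 := by linarith
      have hxh : (0:ℝ) < (x/2) ^ (b - 1/2) := Real.rpow_pos_of_pos hxx _
      have hua : u ^ (b - 1/2) ≤ 4 * (x/2) ^ (b - 1/2) := by
        rcases le_or_gt (b - 1/2) 0 with ha | ha
        · have h1 : u ^ (b - 1/2) ≤ (x/2) ^ (b - 1/2) :=
            Real.rpow_le_rpow_of_nonpos hxx hmem.1 ha
          nlinarith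
        · have h1 : u ^ (b - 1/2) ≤ (3*(x/2)) ^ (b - 1/2) :=
            Real.rpow_le_rpow hu.le (by linarith [hmem.2]) ha.le
          rw [Real.mul_rpow (by norm_num) hxx.le] at h1
          have h2 : (3:ℝ) ^ (b - 1/2) ≤ 3 := by
            calc (3:ℝ) ^ (b - 1/2) ≤ 3 ^ (1:ℝ) :=
                  Real.rpow_le_rpow_of_exponent_le (by norm_num) (by linarith)
              _ = 3 := Real.rpow_one 3
          nlinarith
      have hEb : Real.exp (-(c*u*t)) ≤ Real.exp (-(c*(x/2)*t)) := by
        apply Real.exp_le_exp.mpr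
        have h1 : c*(x/2) ≤ c*u := mul_le_mul_of_nonneg_left hmem.1 hc.le
        have h2 : c*(x/2)*t ≤ c*u*t := mul_le_mul_of_nonneg_right h1 ht.le
        linarith
      have hGu : G u = 3 ^ b * (u ^ (-(1/2) : ℝ) * Real.exp (-(c*t*u))) +
          K * |u - x| ^ (-b) := by
        rw [hGdef]; simp [Set.indicator_of_mem hmem]
      have hmain : u ^ (b - 1/2) * |u - x| ^ (-b) * Real.exp (-(c*u*t)) ≤
          K * |u - x| ^ (-b) := by
        rw [hKdef]
        calc u ^ (b - 1/2) * |u - x| ^ (-b) * Real.exp (-(c*u*t))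
            ≤ (4 * (x/2) ^ (b - 1/2)) * |u - x| ^ (-b) * Real.exp (-(c*(x/2)*t)) := by
              apply mul_le_mul (mul_le_mul_of_nonneg_right hua habs0) hEb
                (Real.exp_pos _).le
              positivity
          _ = 4 * (x/2) ^ (b - 1/2) * Real.exp (-(c*(x/2)*t)) * |u - x| ^ (-b) := by ring
      have hfst0 : 0 ≤ 3 ^ b * (u ^ (-(1/2) : ℝ) * Real.exp (-(c*t*u))) := by positivity
      rw [hGu]
      linarith [hfirst.trans hmain]
    · -- outer zone
      have hmem' : u < x/2 ∨ 3*x/2 < u := by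
        rcases not_and_or.mp ((Set.mem_Icc).not.mp hmem) with h' | h'
        · exact Or.inl (lt_of_not_ge h')
        · exact Or.inr (lt_of_not_ge h')
      have habs : u/3 ≤ |u - x| := by
        rcases hmem' with h' | h'
        · rw [abs_of_neg (by linarith : u - x < 0)]
          linarith
        · have hx23 : x ≤ 2*u/3 := by
            rcases le_or_gt x 0 with h0 | h0
            · linarith
            · linarith
          rw [abs_of_pos (by linarith : 0 < u - x)]
          linarith
      have h2 : |u - x| ^ (-b) ≤ (u/3) ^ (-b) :=
        Real.rpow_le_rpow_of_nonpos (by positivity) habs (by linarith)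
      have h3 : (u/3) ^ (-b) = 3 ^ b * u ^ (-b) := by
        rw [Real.div_rpow hu.le (by norm_num), Real.rpow_neg (by norm_num : (0:ℝ) ≤ 3),
          div_eq_mul_inv, inv_inv, mul_comm]
      have h4 : u ^ (b - 1/2) * u ^ (-b) = u ^ (-(1/2) : ℝ) := by
        rw [← Real.rpow_add hu]; congr 1; ring
      have hEeq : Real.exp (-(c*u*t)) = Real.exp (-(c*t*u)) := by rw [mul_right_comm]
      have hGu : G u = 3 ^ b * (u ^ (-(1/2) : ℝ) * Real.exp (-(c*t*u))) := by
        rw [hGdef]; simp [Set.indicator_of_notMem hmem]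
      calc h u * |u - x| ^ (-b) * Real.exp (-(c*u*t))
          ≤ u ^ (b - 1/2) * |u - x| ^ (-b) * Real.exp (-(c*u*t)) := hfirst
        _ ≤ u ^ (b - 1/2) * (3 ^ b * u ^ (-b)) * Real.exp (-(c*u*t)) :=
            mul_le_mul_of_nonneg_right
              (mul_le_mul_of_nonneg_left (h2.trans_eq h3) (Real.rpow_nonneg hu.le _))
              (Real.exp_pos _).le
        _ = 3 ^ b * (u ^ (-(1/2) : ℝ) * Real.exp (-(c*t*u))) := by
            rw [← h4, ← hEeq]; ring
        _ = G u := hGu.symm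
  -- nonnegativity of integrand
  have hnn : ∀ u : ℝ, u ∈ Set.Ioi (0:ℝ) →
      0 ≤ h u * |u - x| ^ (-(1/p)) * Real.exp (-(c*u*t)) := by
    intro u hu
    exact mul_nonneg (mul_nonneg (hh u hu).1 (Real.rpow_nonneg (abs_nonneg _) _))
      (Real.exp_pos _).le
  have hGint : Integrable G (volume.restrict (Set.Ioi 0)) :=
    (hI1.const_mul _).add hImid.1
  have hmono : (∫ u in Set.Ioi (0:ℝ), h u * |u - x| ^ (-(1/p)) * Real.exp (-(c*u*t))) ≤
      ∫ u in Set.Ioi (0:ℝ), G u := by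
    refine integral_mono_of_nonneg ?_ hGint ?_
    · filter_upwards [ae_restrict_mem measurableSet_Ioi] with u hu
      exact hnn u hu
    · filter_upwards [ae_restrict_mem measurableSet_Ioi] with u hu
      exact hpt u hu
  refine hmono.trans ?_
  rw [hGdef, integral_add (hI1.const_mul _) hImid.1, integral_const_mul, hV1]
  have := hImid.2
  nlinarith [Real.rpow_pos_of_pos ht (-(1/2) : ℝ), Real.rpow_pos_of_pos hc (-(1/2) : ℝ),
    Real.rpow_pos_of_pos (by norm_num : (0:ℝ) < 3) b]
end
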